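/- Let n ≤ N and a ∈ ℝ^{n×N} with decreasing positive rows. Then ‖x‖_a = max{∑_{i=1}^n (∑_{j=1}^{ℓ_i} a_{ij})|x_i| : ℓ_i ∈ {0,...,N}, ∑_i ℓ_i ≤ N} defines a norm on ℝⁿ, and its dual unit ball equals the convex hull of the vectors (ε_i ∑_{j=1}^{k_i} a_{ij})_{i=1}^n over all choices ∑_i k_i ≤ N, ε_i = ±1. -/

import Mathlib

open Finset

/-- An Orlicz function: convex on `[0,∞)`, vanishing at `0`, positive on `(0,∞)`. -/
def IsOrlicz (M : ℝ → ℝ) : Prop :=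
  ConvexOn ℝ (Set.Ici 0) M ∧ M 0 = 0 ∧ ∀ t : ℝ, 0 < t → 0 < M t

/-- Legendre conjugate `M*(x) = sup_{t ≥ 0} (x t − M t)`. -/
noncomputable def orliczConj (M : ℝ → ℝ) (x : ℝ) : ℝ :=
  sSup {v : ℝ | ∃ t : ℝ, 0 ≤ t ∧ v = x * t - M t}

/-- Musielak-Orlicz (Luxemburg-type) functional `‖x‖_{Σ M_i}`. -/
noncomputable def musielakNorm {n : ℕ} (M : Fin n → ℝ → ℝ) (x : Fin n → ℝ) : ℝ :=
  sInf {ρ : ℝ | 0 < ρ ∧ ∑ i, M i (|x i| / ρ) ≤ 1}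

/-- Average over all permutations of `{1,…,n}`. -/
noncomputable def permAve (n : ℕ) (f : Equiv.Perm (Fin n) → ℝ) : ℝ :=
  (∑ π : Equiv.Perm (Fin n), f π) / (Nat.factorial n : ℝ)

/-- Maximum of a function on a nonempty `Fin n`. -/
noncomputable def maxFin {n : ℕ} (hn : 0 < n) (g : Fin n → ℝ) : ℝ :=
  Finset.univ.sup' (Finset.univ_nonempty_iff.mpr ⟨⟨0, hn⟩⟩) g

/-- Partial sums of the rows of the matrix `a`. -/
noncomputable def Spart (n N : ℕ) (a : Fin n → Fin N → ℝ) (i : Fin n) (m : ℕ) : ℝ :=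
  ∑ j : Fin N, if (j : ℕ) < m then a i j else 0

lemma Spart_nonneg {n N : ℕ} {a : Fin n → Fin N → ℝ} (hpos : ∀ i j, 0 < a i j)
    (i : Fin n) (m : ℕ) : 0 ≤ Spart n N a i m :=
  Finset.sum_nonneg fun j _ => by
    by_cases h : (j : ℕ) < m
    · rw [if_pos h]; exact (hpos i j).le
    · rw [if_neg h]

@[simp] lemma Spart_zero {n N : ℕ} {a : Fin n → Fin N → ℝ} (i : Fin n) :
    Spart n N a i 0 = 0 := by
  simp [Spart]

lemma Spart_pos {n N : ℕ} {a : Fin n → Fin N → ℝ} (hpos : ∀ i j, 0 < a i j)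
    (hN : 0 < N) (i : Fin n) {m : ℕ} (hm : 1 ≤ m) : 0 < Spart n N a i m := by
  refine Finset.sum_pos' (fun j _ => ?_) ⟨⟨0, hN⟩, Finset.mem_univ _, ?_⟩
  · by_cases h : (j : ℕ) < m
    · rw [if_pos h]; exact (hpos i j).le
    · rw [if_neg h]
  · have h0 : ((⟨0, hN⟩ : Fin N) : ℕ) < m := hm
    rw [if_pos h0]; exact hpos i _

/-- The set of values whose supremum is `‖x‖_a`. -/
def Aset (n N : ℕ) (a : Fin n → Fin N → ℝ) (x : Fin n → ℝ) : Set ℝ :=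
  {v | ∃ ℓ : Fin n → ℕ, ∑ i, ℓ i ≤ N ∧ v = ∑ i, Spart n N a i (ℓ i) * |x i|}

lemma zero_mem_Aset {n N : ℕ} {a : Fin n → Fin N → ℝ} (x : Fin n → ℝ) :
    (0 : ℝ) ∈ Aset n N a x :=
  ⟨fun _ => 0, by simp, by simp⟩

lemma finite_Aset {n N : ℕ} {a : Fin n → Fin N → ℝ} (x : Fin n → ℝ) :
    (Aset n N a x).Finite := by
  have hsub : Aset n N a x ⊆ Set.range
      (fun ℓ : Fin n → Fin (N + 1) => ∑ i, Spart n N a i (ℓ i) * |x i|) := by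
    rintro v ⟨ℓ, hℓ, rfl⟩
    exact ⟨fun i => ⟨ℓ i, Nat.lt_succ_of_le
      ((Finset.single_le_sum (fun i _ => Nat.zero_le (ℓ i)) (Finset.mem_univ i)).trans hℓ)⟩, rfl⟩
  exact (Set.finite_range _).subset hsub

/-- `‖·‖_a` is a norm on `ℝⁿ` and its dual unit ball is the convex hull of the signed
partial-sum vectors of the matrix `a`. -/
theorem norm_a_and_dual_ball (n N : ℕ) (hnN : n ≤ N)
    (a : Fin n → Fin N → ℝ)
    (hdec : ∀ i, ∀ j k : Fin N, j ≤ k → a i k ≤ a i j)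
    (hpos : ∀ i j, 0 < a i j)
    (Na : (Fin n → ℝ) → ℝ)
    (hNa : ∀ x, Na x = sSup {v : ℝ | ∃ ℓ : Fin n → ℕ, ∑ i, ℓ i ≤ N ∧
        v = ∑ i, (∑ j : Fin N, if (j : ℕ) < ℓ i then a i j else 0) * |x i|}) :
    (∀ x, 0 ≤ Na x) ∧
    (∀ x, Na x = 0 ↔ x = 0) ∧
    (∀ (c : ℝ) (x), Na (c • x) = |c| * Na x) ∧
    (∀ x z, Na (x + z) ≤ Na x + Na z) ∧
    {w : Fin n → ℝ | ∀ x, Na x ≤ 1 → ∑ i, x i * w i ≤ 1}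
      = convexHull ℝ {v : Fin n → ℝ | ∃ (k : Fin n → ℕ) (ε : Fin n → ℝ),
          (∑ i, k i ≤ N) ∧ (∀ i, ε i = 1 ∨ ε i = -1) ∧
          v = fun i => ε i * ∑ j : Fin N, if (j : ℕ) < k i then a i j else 0} := by
  classical
  have hAx : ∀ x, Na x = sSup (Aset n N a x) := hNa
  have hbdd : ∀ x, BddAbove (Aset n N a x) := fun x => (finite_Aset x).bddAbove
  have hne : ∀ x, (Aset n N a x).Nonempty := fun x => ⟨0, zero_mem_Aset x⟩
  have hub : ∀ x v, v ∈ Aset n N a x → v ≤ Na x := fun x v hv =>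
    (hAx x) ▸ le_csSup (hbdd x) hv
  have hle : ∀ x B, (∀ v ∈ Aset n N a x, v ≤ B) → Na x ≤ B := fun x B h =>
    (hAx x) ▸ csSup_le (hne x) h
  have h1 : ∀ x, 0 ≤ Na x := fun x => hub x 0 (zero_mem_Aset x)
  have hNa0 : Na 0 = 0 := by
    refine le_antisymm (hle 0 0 ?_) (h1 0)
    rintro v ⟨ℓ, -, rfl⟩
    simp
  have h2 : ∀ x, Na x = 0 ↔ x = 0 := by
    intro x
    constructor
    · intro h0
      by_contra hx
      obtain ⟨i0, hi0⟩ : ∃ i, x i ≠ 0 := by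
        by_contra h; push_neg at h; exact hx (funext h)
      have hN : 0 < N := lt_of_lt_of_le i0.pos hnN
      have hmem : Spart n N a i0 1 * |x i0| ∈ Aset n N a x := by
        refine ⟨fun i => if i = i0 then 1 else 0, ?_, ?_⟩
        · have hs : ∑ i, (if i = i0 then (1 : ℕ) else 0) = 1 := by simp
          rw [hs]; exact hN
        · symm
          rw [Finset.sum_eq_single i0 (fun i _ hne' => by simp [hne'])
            (fun h => absurd (Finset.mem_univ i0) h)]
          simp
      have hub' := hub x _ hmem
      have hvpos : 0 < Spart n N a i0 1 * |x i0| :=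
        mul_pos (Spart_pos hpos hN i0 le_rfl) (abs_pos.mpr hi0)
      linarith
    · rintro rfl; exact hNa0
  have hsle : ∀ (c : ℝ) (x), Na (c • x) ≤ |c| * Na x := by
    intro c x
    refine hle _ _ ?_
    rintro v ⟨ℓ, hℓ, rfl⟩
    have heq : ∑ i, Spart n N a i (ℓ i) * |(c • x) i| =
        |c| * ∑ i, Spart n N a i (ℓ i) * |x i| := by
      rw [Finset.mul_sum]
      refine Finset.sum_congr rfl fun i _ => ?_
      simp only [Pi.smul_apply, smul_eq_mul, abs_mul]
      ring
    rw [heq]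
    exact mul_le_mul_of_nonneg_left (hub x _ ⟨ℓ, hℓ, rfl⟩) (abs_nonneg c)
  have h3 : ∀ (c : ℝ) (x), Na (c • x) = |c| * Na x := by
    intro c x
    rcases eq_or_ne c 0 with rfl | hc
    · simp [hNa0]
    · refine le_antisymm (hsle c x) ?_
      have h' := hsle c⁻¹ (c • x)
      rw [inv_smul_smul₀ hc] at h'
      have h'' := mul_le_mul_of_nonneg_left h' (abs_nonneg c)
      rw [abs_inv] at h''
      calc |c| * Na x ≤ |c| * (|c|⁻¹ * Na (c • x)) := h''
        _ = Na (c • x) := by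
            rw [← mul_assoc, mul_inv_cancel₀ (abs_ne_zero.mpr hc), one_mul]
  have h4 : ∀ x z, Na (x + z) ≤ Na x + Na z := by
    intro x z
    refine hle _ _ ?_
    rintro v ⟨ℓ, hℓ, rfl⟩
    have hb : ∑ i, Spart n N a i (ℓ i) * |(x + z) i| ≤
        (∑ i, Spart n N a i (ℓ i) * |x i|) + ∑ i, Spart n N a i (ℓ i) * |z i| := by
      rw [← Finset.sum_add_distrib]
      refine Finset.sum_le_sum fun i _ => ?_
      rw [← mul_add]
      exact mul_le_mul_of_nonneg_left (abs_add_le _ _) (Spart_nonneg hpos i _)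
    exact hb.trans (add_le_add (hub x _ ⟨ℓ, hℓ, rfl⟩) (hub z _ ⟨ℓ, hℓ, rfl⟩))
  refine ⟨h1, h2, h3, h4, ?_⟩
  show {w : Fin n → ℝ | ∀ x, Na x ≤ 1 → ∑ i, x i * w i ≤ 1}
      = convexHull ℝ {v : Fin n → ℝ | ∃ (k : Fin n → ℕ) (ε : Fin n → ℝ),
          (∑ i, k i ≤ N) ∧ (∀ i, ε i = 1 ∨ ε i = -1) ∧
          v = fun i => ε i * Spart n N a i (k i)}
  set Vgen : Set (Fin n → ℝ) := {v : Fin n → ℝ | ∃ (k : Fin n → ℕ) (ε : Fin n → ℝ),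
      (∑ i, k i ≤ N) ∧ (∀ i, ε i = 1 ∨ ε i = -1) ∧
      v = fun i => ε i * Spart n N a i (k i)} with hVgen
  have hVfin : Vgen.Finite := by
    have hsub : Vgen ⊆ Set.range (fun p : (Fin n → Fin (N + 1)) × (Fin n → Bool) =>
        fun i => (if p.2 i then (1 : ℝ) else -1) * Spart n N a i (p.1 i)) := by
      rintro v ⟨k, ε, hk, hε, rfl⟩
      refine ⟨⟨fun i => ⟨k i, Nat.lt_succ_of_le
        ((Finset.single_le_sum (fun i _ => Nat.zero_le (k i)) (Finset.mem_univ i)).trans hk)⟩,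
        fun i => if ε i = 1 then true else false⟩, ?_⟩
      funext i
      rcases hε i with h | h
      · simp [h]
      · simp only [h]
        norm_num
    exact (Set.finite_range _).subset hsub
  have hkey : ∀ (x v : Fin n → ℝ), v ∈ Vgen → ∑ i, x i * v i ≤ Na x := by
    rintro x v ⟨k, ε, hk, hε, rfl⟩
    have hbound : ∑ i, x i * (ε i * Spart n N a i (k i)) ≤
        ∑ i, Spart n N a i (k i) * |x i| := by
      refine Finset.sum_le_sum fun i _ => ?_
      have hεabs : |ε i| = 1 := by rcases hε i with h | h <;> simp [h]
      have hxi : x i * ε i ≤ |x i| := by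
        calc x i * ε i ≤ |x i * ε i| := le_abs_self _
          _ = |x i| := by rw [abs_mul, hεabs, mul_one]
      calc x i * (ε i * Spart n N a i (k i)) = (x i * ε i) * Spart n N a i (k i) := by ring
        _ ≤ |x i| * Spart n N a i (k i) :=
            mul_le_mul_of_nonneg_right hxi (Spart_nonneg hpos i _)
        _ = Spart n N a i (k i) * |x i| := mul_comm _ _
    exact hbound.trans (hub x _ ⟨k, hk, rfl⟩)
  have hattain : ∀ x : Fin n → ℝ, ∃ v ∈ Vgen, Na x = ∑ i, x i * v i := by
    intro x
    have hmem : Na x ∈ Aset n N a x := by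
      rw [hAx]; exact (hne x).csSup_mem (finite_Aset x)
    obtain ⟨ℓ, hℓ, hval⟩ := hmem
    refine ⟨fun i => (if 0 ≤ x i then (1 : ℝ) else -1) * Spart n N a i (ℓ i),
      ⟨ℓ, fun i => if 0 ≤ x i then (1 : ℝ) else -1, hℓ, fun i => by
        by_cases h : 0 ≤ x i
        · exact Or.inl (if_pos h)
        · exact Or.inr (if_neg h), rfl⟩, ?_⟩
    rw [hval]
    refine Finset.sum_congr rfl fun i _ => ?_
    show Spart n N a i (ℓ i) * |x i| =
      x i * ((if 0 ≤ x i then (1 : ℝ) else -1) * Spart n N a i (ℓ i))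
    by_cases h : 0 ≤ x i
    · rw [if_pos h, abs_of_nonneg h]; ring
    · rw [if_neg h, abs_of_neg (not_le.mp h)]; ring
  apply Set.Subset.antisymm
  · intro w hw
    by_contra hwc
    obtain ⟨f, u, hfu, huw⟩ := geometric_hahn_banach_closed_point
      (convex_convexHull ℝ Vgen) (hVfin.isCompact_convexHull (𝕜 := ℝ)).isClosed hwc
    set x : Fin n → ℝ := fun i => f (fun j => if i = j then (1 : ℝ) else 0) with hxdef
    have hfv : ∀ v : Fin n → ℝ, f v = ∑ i, v i * x i := by
      intro v
      conv_lhs => rw [pi_eq_sum_univ v]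
      rw [map_sum]
      refine Finset.sum_congr rfl fun i _ => ?_
      rw [map_smul]
      simp only [hxdef, smul_eq_mul]
    have h0V : (0 : Fin n → ℝ) ∈ Vgen :=
      ⟨fun _ => 0, fun _ => 1, by simp, fun _ => Or.inl rfl, by funext i; simp⟩
    have hu0 : (0 : ℝ) < u := by
      have := hfu 0 (subset_convexHull ℝ _ h0V)
      simpa using this
    have hfw : 0 < f w := hu0.trans huw
    have hNx : 0 < Na x := by
      rcases (h1 x).lt_or_eq with h | h
      · exact h
      · exfalso
        have hx0 : x = 0 := (h2 x).mp h.symm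
        rw [hfv w, hx0] at hfw
        simp at hfw
    have hxw : ∑ i, x i * w i ≤ Na x := by
      have hle1 : Na ((Na x)⁻¹ • x) ≤ 1 := by
        rw [h3, abs_of_pos (inv_pos.mpr hNx), inv_mul_cancel₀ hNx.ne']
      have hw1 := hw _ hle1
      have heq : ∑ i, ((Na x)⁻¹ • x) i * w i = (Na x)⁻¹ * ∑ i, x i * w i := by
        rw [Finset.mul_sum]
        exact Finset.sum_congr rfl fun i _ => by
          simp only [Pi.smul_apply, smul_eq_mul]; ring
      rw [heq] at hw1
      calc ∑ i, x i * w i = Na x * ((Na x)⁻¹ * ∑ i, x i * w i) := by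
            rw [← mul_assoc, mul_inv_cancel₀ hNx.ne', one_mul]
        _ ≤ Na x * 1 := mul_le_mul_of_nonneg_left hw1 hNx.le
        _ = Na x := mul_one _
    obtain ⟨v, hv, hvx⟩ := hattain x
    have hfvlt : f v < u := hfu v (subset_convexHull ℝ _ hv)
    have hNa_lt : Na x < f w := by
      have hNfv : Na x = f v := by
        rw [hvx, hfv v]
        exact Finset.sum_congr rfl fun i _ => mul_comm _ _
      rw [hNfv]
      exact hfvlt.trans huw
    have hfw_le : f w ≤ Na x := by
      rw [hfv w]
      calc ∑ i, w i * x i = ∑ i, x i * w i :=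
            Finset.sum_congr rfl fun i _ => mul_comm _ _
        _ ≤ Na x := hxw
    linarith
  · refine convexHull_min ?_ ?_
    · intro v hv x hx
      exact (hkey x v hv).trans hx
    · intro w1 hw1 w2 hw2 t1 t2 ht1 ht2 hts x hx
      have e1 := hw1 x hx
      have e2 := hw2 x hx
      have heq : ∑ i, x i * (t1 • w1 + t2 • w2) i =
          t1 * ∑ i, x i * w1 i + t2 * ∑ i, x i * w2 i := by
        rw [Finset.mul_sum, Finset.mul_sum, ← Finset.sum_add_distrib]
        refine Finset.sum_congr rfl fun i _ => ?_
        simp only [Pi.add_apply, Pi.smul_apply, smul_eq_mul]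
        ring
      show ∑ i, x i * (t1 • w1 + t2 • w2) i ≤ 1
      rw [heq]
      calc t1 * ∑ i, x i * w1 i + t2 * ∑ i, x i * w2 i ≤ t1 * 1 + t2 * 1 :=
            add_le_add (mul_le_mul_of_nonneg_left e1 ht1) (mul_le_mul_of_nonneg_left e2 ht2)
        _ = 1 := by rw [mul_one, mul_one]; exact hts
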